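/- Assume k is a nontrivial commutative ring and a + b ≤ n. Then the family of linear maps (T_P), indexed by the partition diagrams P of type (a,b), is linearly independent over k in Hom_k(V^{⊗a}, V^{⊗b}). -/

import Mathlib

open scoped Classical

/-- A partition diagram of type `(a,b)`: a set partition of `Fin a ⊕ Fin b`
into nonempty blocks. -/
abbrev PartitionDiagram (a b : ℕ) :=
  Finpartition (Finset.univ : Finset (Fin a ⊕ Fin b))

/-- `Sum.elim f g` is constant on every block of `P`. -/
def Compatible {n a b : ℕ} (P : PartitionDiagram a b)
    (f : Fin a → Fin n) (g : Fin b → Fin n) : Prop :=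
  ∀ B ∈ P.parts, ∀ x ∈ B, ∀ y ∈ B, Sum.elim f g x = Sum.elim f g y

/-- The linear map `T_P : V^{⊗a} → V^{⊗b}` associated to a partition diagram `P`,
where `V^{⊗a}` is modelled as the free module on `Fin a → Fin n`, with basis vector
at `f` corresponding to `e_{f(1)} ⊗ ⋯ ⊗ e_{f(a)}`. -/
noncomputable def TP (k : Type*) [CommRing k] (n : ℕ) {a b : ℕ}
    (P : PartitionDiagram a b) :
    ((Fin a → Fin n) → k) →ₗ[k] ((Fin b → Fin n) → k) where
  toFun x g := ∑ f : Fin a → Fin n, if Compatible P f g then x f else 0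
  map_add' x y := by
    funext g
    simp only [Pi.add_apply]
    rw [← Finset.sum_add_distrib]
    exact Finset.sum_congr rfl fun f _ => by split <;> simp
  map_smul' c x := by
    funext g
    simp only [Pi.smul_apply, smul_eq_mul, RingHom.id_apply]
    rw [Finset.mul_sum]
    exact Finset.sum_congr rfl fun f _ => by split <;> simp

/-- The (diagonal) action of `σ ∈ S_n` on `V^{⊗a}`: on basis vectors it sends
`e_{f(1)} ⊗ ⋯ ⊗ e_{f(a)}` to `e_{σ(f(1))} ⊗ ⋯ ⊗ e_{σ(f(a))}`. -/
def permMap (k : Type*) [CommRing k] {n a : ℕ} (σ : Equiv.Perm (Fin n)) :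
    ((Fin a → Fin n) → k) →ₗ[k] ((Fin a → Fin n) → k) where
  toFun x f := x fun i => σ⁻¹ (f i)
  map_add' _ _ := rfl
  map_smul' _ _ := rfl



lemma exists_witness {n a b : ℕ} (hab : a + b ≤ n) (P : PartitionDiagram a b) :
    ∃ (f : Fin a → Fin n) (g : Fin b → Fin n),
      ∀ Q : PartitionDiagram a b, Compatible Q f g ↔ Q ≤ P := by
  have hcard : Fintype.card {B // B ∈ P.parts} ≤ Fintype.card (Fin n) := by
    rw [Fintype.card_coe, Fintype.card_fin]
    exact le_trans (le_trans P.card_parts_le_card (by simp)) hab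
  obtain ⟨ι⟩ := Function.Embedding.nonempty_iff_card_le.2 hcard
  set h : Fin a ⊕ Fin b → Fin n :=
    fun x => ι ⟨P.part x, P.part_mem.2 (Finset.mem_univ x)⟩ with hh
  refine ⟨h ∘ Sum.inl, h ∘ Sum.inr, fun Q => ?_⟩
  have helim : Sum.elim (h ∘ Sum.inl) (h ∘ Sum.inr) = h := by
    funext x; cases x <;> rfl
  constructor
  · intro hc B hB
    obtain ⟨x, hx⟩ := Q.nonempty_of_mem_parts hB
    refine ⟨P.part x, P.part_mem.2 (Finset.mem_univ x), fun y hy => ?_⟩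
    have := hc B hB y hy x hx
    rw [helim] at this
    have hparts : P.part y = P.part x := congrArg Subtype.val (ι.injective this)
    rw [← hparts]
    exact P.mem_part (Finset.mem_univ y)
  · intro hle B hB x hx y hy
    obtain ⟨C, hC, hBC⟩ := hle hB
    rw [helim]
    show ι _ = ι _
    congr 1
    exact Subtype.ext ((P.part_eq_of_mem hC (hBC hx)).trans (P.part_eq_of_mem hC (hBC hy)).symm)

/-- if `k` is a nontrivial commutative ring and `a + b ≤ n`, the family
`(T_P)` indexed by partition diagrams of type `(a,b)` is linearly independent. -/
theorem stmt8 (k : Type*) [CommRing k] [Nontrivial k] (n a b : ℕ) (hn : 0 < n)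
    (hab : a + b ≤ n) :
    LinearIndependent k fun P : PartitionDiagram a b => TP k n P := by
  rw [linearIndependent_iff']
  intro s c hc
  have key : ∀ P : PartitionDiagram a b, ∑ Q ∈ s.filter (· ≤ P), c Q = 0 := by
    intro P
    obtain ⟨f, g, hfg⟩ := exists_witness hab P
    have h1 : ((∑ Q ∈ s, c Q • TP k n Q) (Pi.single f (1 : k))) g = 0 := by
      rw [hc]; rfl
    rw [LinearMap.sum_apply] at h1
    rw [Finset.sum_apply] at h1
    have h4 : ∀ Q ∈ s, (c Q • TP k n Q) (Pi.single f (1 : k)) g = if Q ≤ P then c Q else 0 := by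
      intro Q hQ
      have hT : (TP k n Q (Pi.single f (1 : k))) g = if Compatible Q f g then 1 else 0 := by
        show (∑ f' : Fin a → Fin n, if Compatible Q f' g then Pi.single f (1:k) f' else 0) = _
        rw [Finset.sum_eq_single f]
        · simp
        · intro f' _ hne
          simp [Pi.single_apply, hne]
        · simp
      simp only [LinearMap.smul_apply, Pi.smul_apply, hT, hfg Q, smul_eq_mul]
      split <;> simp
    rw [Finset.sum_congr rfl h4] at h1
    rw [Finset.sum_filter]
    exact h1
  intro P hP
  induction P using WellFoundedLT.induction with
  | _ P IH =>
    have hmem : P ∈ s.filter (· ≤ P) := Finset.mem_filter.2 ⟨hP, le_refl P⟩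
    have h2 := key P
    rw [← Finset.add_sum_erase _ _ hmem] at h2
    have h3 : ∑ Q ∈ (s.filter (· ≤ P)).erase P, c Q = 0 := by
      refine Finset.sum_eq_zero fun Q hQ => ?_
      obtain ⟨hne, hQ'⟩ := Finset.mem_erase.1 hQ
      obtain ⟨hQs, hQle⟩ := Finset.mem_filter.1 hQ'
      exact IH Q (lt_of_le_of_ne hQle hne) hQs
    rw [h3, add_zero] at h2
    exact h2
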